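/- (Theorem 4.2, norm formula.) For every continuous K-linear operator T : H →L[K] H one has ‖T‖ = ⨆ n : ℕ, ‖T (e n)‖ and also ‖T‖ = ⨆ q : ℕ × ℕ, ‖(T (e q.2)) q.1‖; i.e. the operator norm of a bounded operator equals the supremum of the norms of its columns, which equals the supremum of the norms (absolute values) of its matrix entries. -/

import Mathlib

open Filter

noncomputable section

variable (K : Type*) [NontriviallyNormedField K] [IsUltrametricDist K]
  [CompleteSpace K] [StarRing K] [NormedStarGroup K]

/-- The p-adic coordinate Hilbert space: zero-convergent sequences in `K` with sup norm. -/
abbrev H := ZeroAtInftyContinuousMap ℕ K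

/-- The standard basis vectors of `H K`. -/
def e (n : ℕ) : H K where
  toFun := fun m => if m = n then 1 else 0
  continuous_toFun := continuous_of_discreteTopology
  zero_at_infty' := by
    rw [cocompact_eq_atTop]
    refine Filter.Tendsto.congr' ?_ tendsto_const_nhds
    filter_upwards [Filter.eventually_gt_atTop n] with m hm
    simp [Nat.ne_of_gt hm]

/-- The canonical inner product on `H K`: `⟪x, y⟫ = ∑' i, star (x i) * y i`. -/
def inner' (x y : H K) : K := ∑' i, star (x i) * y i

/-- A bounded operator is of trace class if its matrix entries vanish along the
cofinite filter of `ℕ × ℕ`. -/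
def IsTraceClass (T : H K →L[K] H K) : Prop :=
  Tendsto (fun q : ℕ × ℕ => (T (e K q.2)) q.1) Filter.cofinite (nhds 0)

lemma e_apply (n m : ℕ) : e K n m = if m = n then 1 else 0 := rfl

lemma H_norm_apply_le (f : H K) (m : ℕ) : ‖f m‖ ≤ ‖f‖ := by
  rw [← ZeroAtInftyContinuousMap.norm_toBCF_eq_norm]
  exact f.toBCF.norm_coe_le_norm m

lemma H_norm_eq_iSup (f : H K) : ‖f‖ = ⨆ m, ‖f m‖ := by
  rw [← ZeroAtInftyContinuousMap.norm_toBCF_eq_norm]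
  exact f.toBCF.norm_eq_iSup_norm

instance : IsUltrametricDist (H K) := by
  constructor
  intro f g h
  rw [← ZeroAtInftyContinuousMap.dist_toBCF_eq_dist,
    ← ZeroAtInftyContinuousMap.dist_toBCF_eq_dist,
    ← ZeroAtInftyContinuousMap.dist_toBCF_eq_dist]
  rw [BoundedContinuousFunction.dist_le (le_max_of_le_left dist_nonneg)]
  intro x
  refine (dist_triangle_max (f x) (g x) (h x)).trans (max_le_max ?_ ?_)
  · exact BoundedContinuousFunction.dist_coe_le_dist (f := f.toBCF) (g := g.toBCF) x
  · exact BoundedContinuousFunction.dist_coe_le_dist (f := g.toBCF) (g := h.toBCF) x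

lemma H_norm_smul (c : K) (f : H K) : ‖c • f‖ = ‖c‖ * ‖f‖ := norm_smul c f

lemma norm_e (n : ℕ) : ‖e K n‖ = 1 := by
  apply le_antisymm
  · rw [← ZeroAtInftyContinuousMap.norm_toBCF_eq_norm]
    refine (BoundedContinuousFunction.norm_le zero_le_one).mpr fun m => ?_
    show ‖e K n m‖ ≤ 1
    rw [e_apply]
    split <;> simp
  · have := H_norm_apply_le K (e K n) n
    simpa [e_apply] using this

lemma hasSum_basis (x : H K) : HasSum (fun n => x n • e K n) x := by
  have htend : Tendsto (fun n => x n • e K n) cofinite (nhds 0) := by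
    rw [tendsto_zero_iff_norm_tendsto_zero]
    have hx : Tendsto (fun n => ‖x n‖) cofinite (nhds 0) := by
      have := x.zero_at_infty'
      rw [cocompact_eq_atTop, ← Nat.cofinite_eq_atTop] at this
      simpa using this.norm
    refine hx.congr fun n => ?_
    rw [H_norm_smul, norm_e, mul_one]
  obtain ⟨y, hy⟩ := NonarchimedeanAddGroup.summable_of_tendsto_cofinite_zero htend
  have hyx : y = x := by
    ext m
    have hcont : Continuous fun f : H K => f m :=
      (continuous_eval_const (F := BoundedContinuousFunction ℕ K) m).comp
        (ZeroAtInftyContinuousMap.isometry_toBCF.continuous)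
    have hev : HasSum (fun n => (x n • e K n) m) (y m) :=
      hy.map (AddMonoidHom.mk' (fun f : H K => f m) (fun f g => rfl)) hcont
    have hev' : HasSum (fun n => (x n • e K n) m) (x m) := by
      have h0 : ∀ n ≠ m, (x n • e K n) m = 0 := by
        intro n hn
        simp [ZeroAtInftyContinuousMap.coe_smul, e_apply, Ne.symm hn]
      have := hasSum_single (f := fun n => (x n • e K n) m) m h0
      simpa [ZeroAtInftyContinuousMap.coe_smul, e_apply] using this
    exact hev.unique hev'
  rwa [hyx] at hy

/-- The operator norm of a bounded operator equals the supremum of the norms of its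
columns, which equals the supremum of the norms of its matrix entries. -/
theorem stmt2 (T : H K →L[K] H K) :
    ‖T‖ = ⨆ n : ℕ, ‖T (e K n)‖ ∧ ‖T‖ = ⨆ q : ℕ × ℕ, ‖(T (e K q.2)) q.1‖ := by
  have hcol : ∀ n, ‖T (e K n)‖ ≤ ‖T‖ := fun n => by
    simpa [norm_e] using T.le_opNorm (e K n)
  have hbdd : BddAbove (Set.range fun n => ‖T (e K n)‖) :=
    ⟨‖T‖, by rintro _ ⟨n, rfl⟩; exact hcol n⟩
  have hC0 : (0:ℝ) ≤ ⨆ n, ‖T (e K n)‖ := le_ciSup_of_le hbdd 0 (norm_nonneg _)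
  have h1 : ‖T‖ = ⨆ n, ‖T (e K n)‖ := by
    apply le_antisymm
    · refine T.opNorm_le_bound hC0 fun x => ?_
      have hs := hasSum_basis K x
      have hTs : HasSum (fun n => T (x n • e K n)) (T x) := hs.mapL T
      rw [← hTs.tsum_eq]
      refine IsUltrametricDist.norm_tsum_le_of_forall_le_of_nonneg
        (mul_nonneg hC0 (norm_nonneg x)) fun n => ?_
      rw [map_smul, H_norm_smul, mul_comm]
      exact mul_le_mul (le_ciSup hbdd n) (H_norm_apply_le K x n)
        (norm_nonneg _) hC0
    · exact ciSup_le hcol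
  refine ⟨h1, ?_⟩
  have hent : ∀ q : ℕ × ℕ, ‖(T (e K q.2)) q.1‖ ≤ ‖T‖ := fun q =>
    (H_norm_apply_le K _ q.1).trans (hcol q.2)
  have hbdd2 : BddAbove (Set.range fun q : ℕ × ℕ => ‖(T (e K q.2)) q.1‖) :=
    ⟨‖T‖, by rintro _ ⟨q, rfl⟩; exact hent q⟩
  apply le_antisymm
  · rw [h1]
    refine ciSup_le fun n => ?_
    rw [H_norm_eq_iSup]
    exact ciSup_le fun m => le_ciSup hbdd2 (m, n)
  · exact ciSup_le hent
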